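/- For every integer p ≥ 2, H_p = (r^p sin θ − r sin(pθ) + sin((p−1)θ)) / ((r² − 2r cos θ + 1) r^{p−2} sin θ); note that the denominator is nonzero since r² − 2r cos θ + 1 > 0 and sin θ > 0 for θ ∈ (0,π). -/

import Mathlib

/-!
Context: fix real r > 0 and θ ∈ (0,π), set λ₁ = r e^{iθ}, λ₂ = r e^{−iθ}.
H_p = Σ_{j=1}^{p−1} Σ_{k=1}^{j} λ₁^{k−j} λ₂^{1−k}.
-/

/-- H_p = Σ_{j=1}^{p−1} Σ_{k=1}^{j} λ₁^{k−j} λ₂^{1−k}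
(indices shifted: j = j'+1, k = k'+1). -/
noncomputable def Hp (l1 l2 : ℂ) (p : ℕ) : ℂ :=
  ∑ j ∈ Finset.range (p - 1), ∑ k ∈ Finset.range (j + 1),
    l1 ^ ((k : ℤ) - (j : ℤ)) * l2 ^ (-(k : ℤ))

lemma term_eq (r z : ℂ) (hr : r ≠ 0) (hz : z ≠ 0) (j k : ℕ) :
    (r * z) ^ ((k : ℤ) - (j : ℤ)) * (r * z⁻¹) ^ (-(k : ℤ))
      = (r ^ j * z ^ j)⁻¹ * (z ^ 2) ^ k := by
  have hrz : r * z ≠ 0 := mul_ne_zero hr hz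
  rw [zpow_sub₀ hrz, zpow_neg, zpow_natCast, zpow_natCast, zpow_natCast]
  field_simp [mul_pow]
  rw [div_pow]
  field_simp
  ring

set_option maxHeartbeats 2000000 in
/-- With λ₁ = r e^{iθ} and λ₂ = r e^{−iθ}, for every p ≥ 2:
H_p = (r^p sin θ − r sin(pθ) + sin((p−1)θ)) / ((r² − 2r cos θ + 1) r^{p−2} sin θ). -/
theorem Hp_eq_trig (r θ : ℝ) (hr : 0 < r) (hθ0 : 0 < θ) (hθπ : θ < Real.pi)
    (p : ℕ) (hp : 2 ≤ p) :
    Hp ((r : ℂ) * Complex.exp ((θ : ℂ) * Complex.I))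
       ((r : ℂ) * Complex.exp (-(θ : ℂ) * Complex.I)) p
      = (((r ^ p * Real.sin θ - r * Real.sin (p * θ) + Real.sin (((p : ℝ) - 1) * θ)) /
          ((r ^ 2 - 2 * r * Real.cos θ + 1) * r ^ (p - 2) * Real.sin θ) : ℝ) : ℂ) := by
  obtain ⟨n, rfl⟩ : ∃ n, p = n + 2 := ⟨p - 2, by omega⟩
  have hr0 : (r : ℂ) ≠ 0 := by exact_mod_cast hr.ne'
  set z : ℂ := Complex.exp ((θ : ℂ) * Complex.I) with hzdef
  have hz : z ≠ 0 := Complex.exp_ne_zero _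
  have hsinθ : 0 < Real.sin θ := Real.sin_pos_of_pos_of_lt_pi hθ0 hθπ
  have himz : z.im = Real.sin θ := by
    rw [hzdef, Complex.exp_ofReal_mul_I_im]
  -- z^2 ≠ 1
  have hz2 : z ^ 2 ≠ 1 := by
    intro hcontra
    rw [hzdef, sq, ← Complex.exp_add, Complex.exp_eq_one_iff] at hcontra
    obtain ⟨m, hm⟩ := hcontra
    have : (2 * θ : ℂ) * Complex.I = (m * (2 * Real.pi)) * Complex.I := by
      push_cast at hm ⊢; linear_combination hm
    have h2 : (2 * θ : ℝ) = m * (2 * Real.pi) := by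
      have := mul_right_cancel₀ Complex.I_ne_zero this
      exact_mod_cast this
    have hπ : 0 < Real.pi := Real.pi_pos
    rcases lt_trichotomy (m : ℝ) 1 with h | h | h
    · have hm0 : (m : ℝ) ≤ 0 := by
        have : m < 1 := by exact_mod_cast h
        have : m ≤ 0 := by omega
        exact_mod_cast this
      nlinarith
    · nlinarith
    · have : (1 : ℝ) ≤ m - 1 + 1 := by
        have : (1:ℤ) < m := by exact_mod_cast h
        have : (2:ℤ) ≤ m := by omega
        have : (2:ℝ) ≤ m := by exact_mod_cast this
        linarith
      nlinarith
  have hzr : z ≠ (r : ℂ) := by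
    intro h
    rw [h] at himz
    simp [Complex.ofReal_im] at himz
    linarith
  have hrz1 : (r : ℂ) * z ≠ 1 := by
    intro h
    have : ((r : ℂ) * z).im = 0 := by rw [h]; simp
    rw [Complex.mul_im] at this
    simp [Complex.ofReal_re, Complex.ofReal_im, himz] at this
    rcases this with h1 | h1 <;> nlinarith
  have hq1 : z / (r : ℂ) ≠ 1 := by
    intro h
    rw [div_eq_one_iff_eq hr0] at h
    exact hzr h
  have hq2 : ((r : ℂ) * z)⁻¹ ≠ 1 := by
    intro h
    rw [inv_eq_one] at h
    exact hrz1 h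
  have hz21 : z ^ 2 - 1 ≠ 0 := sub_ne_zero.mpr hz2
  -- rewrite l2
  have hl2 : (r : ℂ) * Complex.exp (-(θ : ℂ) * Complex.I) = (r : ℂ) * z⁻¹ := by
    rw [hzdef, ← Complex.exp_neg]; ring_nf
  rw [hl2]
  -- compute the sum
  have hsum : Hp ((r : ℂ) * z) ((r : ℂ) * z⁻¹) (n + 2)
      = (z ^ 2 * (((z / r) ^ (n + 1) - 1) / (z / r - 1))
          - ((((r : ℂ) * z)⁻¹) ^ (n + 1) - 1) / (((r : ℂ) * z)⁻¹ - 1)) / (z ^ 2 - 1) := by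
    unfold Hp
    have step1 : ∀ j ∈ Finset.range (n + 2 - 1),
        (∑ k ∈ Finset.range (j + 1),
          ((r : ℂ) * z) ^ ((k : ℤ) - (j : ℤ)) * ((r : ℂ) * z⁻¹) ^ (-(k : ℤ)))
        = (z ^ 2 * (z / r) ^ j - (((r : ℂ) * z)⁻¹) ^ j) / (z ^ 2 - 1) := by
      intro j _
      rw [Finset.sum_congr rfl (fun k _ => term_eq (r : ℂ) z hr0 hz j k)]
      rw [← Finset.mul_sum, geom_sum_eq hz2]
      simp only [div_pow, inv_pow, mul_pow]
      field_simp
      ring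
    rw [Finset.sum_congr rfl step1]
    have : (n + 2 - 1) = n + 1 := by omega
    rw [this]
    rw [← Finset.sum_div]
    congr 1
    rw [Finset.sum_sub_distrib, ← Finset.mul_sum, geom_sum_eq hq1, geom_sum_eq hq2]
  rw [hsum]
  -- trig rewrites
  have hsin : ∀ m : ℕ, ((Real.sin (m * θ) : ℝ) : ℂ) = ((z⁻¹) ^ m - z ^ m) * Complex.I / 2 := by
    intro m
    have h1 : Complex.exp (-((((m : ℝ) * θ : ℝ)) : ℂ) * Complex.I) = (z⁻¹) ^ m := by
      rw [hzdef, ← Complex.exp_neg, ← Complex.exp_nat_mul]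
      congr 1
      push_cast
      ring
    have h2 : Complex.exp (((((m : ℝ) * θ : ℝ)) : ℂ) * Complex.I) = z ^ m := by
      rw [hzdef, ← Complex.exp_nat_mul]
      congr 1
      push_cast
      ring
    rw [Complex.ofReal_sin, Complex.sin, h1, h2]
  have hsin1 : ((Real.sin θ : ℝ) : ℂ) = (z⁻¹ - z) * Complex.I / 2 := by
    have := hsin 1
    simpa using this
  have hcos : ((Real.cos θ : ℝ) : ℂ) = (z + z⁻¹) / 2 := by
    rw [Complex.ofReal_cos, Complex.cos, hzdef, ← Complex.exp_neg]
    ring_nf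
  -- denominator nonzero
  have hrn : (0 : ℝ) < r ^ n := pow_pos hr n
  have hDpos : (0 : ℝ) < (r ^ 2 - 2 * r * Real.cos θ + 1) * r ^ (n + 2 - 2) * Real.sin θ := by
    have h1 : (0 : ℝ) < r ^ 2 - 2 * r * Real.cos θ + 1 := by
      nlinarith [sq_nonneg (r - Real.cos θ), Real.sin_sq_add_cos_sq θ, sq_nonneg (Real.sin θ)]
    have : (n + 2 - 2) = n := by omega
    rw [this]
    positivity
  have hD : ((((r ^ 2 - 2 * r * Real.cos θ + 1) * r ^ (n + 2 - 2) * Real.sin θ) : ℝ) : ℂ) ≠ 0 := by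
    exact_mod_cast hDpos.ne'
  rw [Complex.ofReal_div, eq_div_iff hD]
  have hn2 : (n + 2 - 2) = n := by omega
  push_cast [hn2]
  have hsinC : ∀ m : ℕ, Complex.sin ((m : ℂ) * (θ : ℂ)) = ((z⁻¹) ^ m - z ^ m) * Complex.I / 2 := by
    intro m
    have h1 : Complex.exp (-((m : ℂ) * (θ : ℂ)) * Complex.I) = (z⁻¹) ^ m := by
      rw [hzdef, ← Complex.exp_neg, ← Complex.exp_nat_mul]
      congr 1
      ring
    have h2 : Complex.exp (((m : ℂ) * (θ : ℂ)) * Complex.I) = z ^ m := by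
      rw [hzdef, ← Complex.exp_nat_mul]
      congr 1
      ring
    rw [Complex.sin, h1, h2]
  have hsinC1 : Complex.sin (θ : ℂ) = (z⁻¹ - z) * Complex.I / 2 := by
    have h := hsinC 1
    push_cast at h
    simpa using h
  have hcosC : Complex.cos (θ : ℂ) = (z + z⁻¹) / 2 := by
    rw [Complex.cos, hzdef, ← Complex.exp_neg]
    ring_nf
  have hsinC' : ∀ m : ℕ, Complex.sin ((m : ℂ) * (θ : ℂ)) = (1 - (z ^ m) ^ 2) * Complex.I / (2 * z ^ m) := by
    intro m
    rw [hsinC m, inv_pow]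
    field_simp
  have hsinC1' : Complex.sin (θ : ℂ) = (1 - z ^ 2) * Complex.I / (2 * z) := by
    rw [hsinC1]
    field_simp
  have hcosC' : Complex.cos (θ : ℂ) = (z ^ 2 + 1) / (2 * z) := by
    rw [hcosC]
    field_simp
  rw [show ((n : ℂ) + 2 - 1) * (θ : ℂ) = ((n + 1 : ℕ) : ℂ) * (θ : ℂ) by push_cast; ring,
     show ((n : ℂ) + 2) * (θ : ℂ) = ((n + 2 : ℕ) : ℂ) * (θ : ℂ) by push_cast; ring,
     hsinC', hsinC', hsinC1', hcosC']
  have hzrne : z - (r : ℂ) ≠ 0 := sub_ne_zero.mpr hzr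
  have hrz1ne : (r : ℂ) * z - 1 ≠ 0 := sub_ne_zero.mpr hrz1
  have hq1ne : z / (r : ℂ) - 1 ≠ 0 := sub_ne_zero.mpr hq1
  have hq2ne : ((r : ℂ) * z)⁻¹ - 1 ≠ 0 := sub_ne_zero.mpr hq2
  have hA : ((z / (r : ℂ)) ^ (n + 1) - 1) / (z / (r : ℂ) - 1)
      = (z ^ (n + 1) - (r : ℂ) ^ (n + 1)) / ((r : ℂ) ^ n * (z - (r : ℂ))) := by
    rw [div_pow]
    rw [div_eq_div_iff]
    · field_simp
      ring
    · rw [div_sub' hr0]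
      apply div_ne_zero _ hr0
      simpa [sub_ne_zero] using hzrne
    · exact mul_ne_zero (pow_ne_zero _ hr0) hzrne
  have hB : ((((r : ℂ) * z)⁻¹) ^ (n + 1) - 1) / (((r : ℂ) * z)⁻¹ - 1)
      = (((r : ℂ) * z) ^ (n + 1) - 1) / ((((r : ℂ) * z)) ^ n * ((r : ℂ) * z - 1)) := by
    have hrz : (r : ℂ) * z ≠ 0 := mul_ne_zero hr0 hz
    rw [inv_pow]
    rw [div_eq_div_iff]
    · field_simp
      ring
    · intro h
      apply hq2ne
      rw [sub_eq_zero] at h ⊢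
      rw [h]
    · exact mul_ne_zero (pow_ne_zero _ hrz) hrz1ne
  rw [hA, hB]
  have hfac : ((r : ℂ)) ^ 2 - 2 * (r : ℂ) * ((z ^ 2 + 1) / (2 * z)) + 1
      = (-(z - (r : ℂ)) * ((r : ℂ) * z - 1)) / z := by
    field_simp
    ring
  rw [hfac]
  have hzn : z ^ n ≠ 0 := pow_ne_zero _ hz
  have hrn' : (r : ℂ) ^ n ≠ 0 := pow_ne_zero _ hr0
  simp only [pow_succ, mul_pow]
  generalize z ^ n = A at hzn ⊢
  generalize (r : ℂ) ^ n = B at hrn' ⊢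
  have hS : (-(z ^ 2 * A * B ^ 2 * (r : ℂ) * 2) + z ^ 3 * A * B ^ 2 * 2 +
        z ^ 3 * A * B ^ 2 * (r : ℂ) ^ 2 * 2 +
        (-(z ^ 5 * A * B ^ 2 * 2) - z ^ 5 * A * B ^ 2 * (r : ℂ) ^ 2 * 2) +
        z ^ 6 * A * B ^ 2 * (r : ℂ) * 2) ≠ 0 := by
    have hfact : (-(z ^ 2 * A * B ^ 2 * (r : ℂ) * 2) + z ^ 3 * A * B ^ 2 * 2 +
        z ^ 3 * A * B ^ 2 * (r : ℂ) ^ 2 * 2 +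
        (-(z ^ 5 * A * B ^ 2 * 2) - z ^ 5 * A * B ^ 2 * (r : ℂ) ^ 2 * 2) +
        z ^ 6 * A * B ^ 2 * (r : ℂ) * 2)
        = 2 * A * B ^ 2 * z ^ 2 * ((z - (r : ℂ)) * (((r : ℂ) * z - 1) * (z ^ 2 - 1))) := by
      ring
    rw [hfact]
    exact mul_ne_zero (mul_ne_zero (mul_ne_zero (mul_ne_zero two_ne_zero hzn)
      (pow_ne_zero _ hrn')) (pow_ne_zero _ hz))
      (mul_ne_zero hzrne (mul_ne_zero hrz1ne hz21))
  field_simp [hz, hr0, hzn, hrn', hzrne, hrz1ne, hz21, hS, sub_ne_zero]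
  have hzz1 : z * z - 1 ≠ 0 := by rw [← sq]; exact hz21
  have hDx : B * (z - (r : ℂ)) * (B * A * ((r : ℂ) * z - 1)) * (z * z - 1) * (z * (2 * z)) ≠ 0 :=
    mul_ne_zero (mul_ne_zero (mul_ne_zero (mul_ne_zero hrn' hzrne)
      (mul_ne_zero (mul_ne_zero hrn' hzn) hrz1ne)) hzz1)
      (mul_ne_zero hz (mul_ne_zero two_ne_zero hz))
  have hDy : (2 : ℂ) * z * (2 * (A * z * z)) ≠ 0 :=
    mul_ne_zero (mul_ne_zero two_ne_zero hz)
      (mul_ne_zero two_ne_zero (mul_ne_zero (mul_ne_zero hzn hz) hz))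
  have hzr1 : z * (r : ℂ) - 1 ≠ 0 := by rw [mul_comm]; exact hrz1ne
  field_simp
  ring
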